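/- For any finite nonempty subtraction set S of positive integers, the zero-sum scoring outcome satisfies 0 ≤ o_zs(h) ≤ max S for every heap size h; in particular the starting player never has a disadvantage, and their advantage is at most the largest legal move. -/
import Mathlib


inductive TB : Type
  | FvF | FvA | AvF | AvA
deriving DecidableEq

def TB.dual : TB → TB
  | .FvF => .FvF
  | .FvA => .AvF
  | .AvF => .FvA
  | .AvA => .AvA

/-- `true` iff the current mover is friendly (first letter F). -/
def TB.friendly : TB → Bool
  | .FvF => true
  | .FvA => true
  | .AvF => false
  | .AvA => false

/-- PSPE outcome pair `(o¹_X h, o²_X h)` for subtraction set `S`. -/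
def outc (S : Finset ℕ) (h : ℕ) (X : TB) : ℕ × ℕ :=
  let M := S.filter fun s => 0 < s ∧ s ≤ h
  if hM : M.Nonempty then
    have hA : M.attach.Nonempty := (Finset.attach_nonempty_iff).mpr hM
    let f : {s // s ∈ M} → ℕ := fun s =>
      have hs : h - s.1 < h := by
        have h1 := (Finset.mem_filter.mp s.2).2
        omega
      s.1 + (outc S (h - s.1) X.dual).2
    let o1 := M.attach.sup f
    let Mstar := M.attach.filter fun s => f s = o1
    have hMs : Mstar.Nonempty := by
      obtain ⟨b, hb, hbe⟩ := Finset.exists_mem_eq_sup M.attach hA f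
      exact ⟨b, Finset.mem_filter.mpr ⟨hb, hbe.symm⟩⟩
    let g : {s // s ∈ M} → ℕ := fun s =>
      have hs : h - s.1 < h := by
        have h1 := (Finset.mem_filter.mp s.2).2
        omega
      (outc S (h - s.1) X.dual).1
    if X.friendly then (o1, Mstar.sup g) else (o1, Mstar.inf' hMs g)
  else (0, 0)
termination_by h

/-- First player's PSPE utility. -/
def o1 (S : Finset ℕ) (X : TB) (h : ℕ) : ℕ := (outc S h X).1

/-- Second player's PSPE utility. -/
def o2 (S : Finset ℕ) (X : TB) (h : ℕ) : ℕ := (outc S h X).2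

/-- Zero-sum scoring outcome for subtraction set `S`. -/
def zs (S : Finset ℕ) (h : ℕ) : ℤ :=
  let M := S.filter fun s => 0 < s ∧ s ≤ h
  if hM : M.Nonempty then
    M.attach.sup' ((Finset.attach_nonempty_iff).mpr hM) fun s =>
      have hs : h - s.1 < h := by
        have h1 := (Finset.mem_filter.mp s.2).2
        omega
      (s.1 : ℤ) - zs S (h - s.1)
  else 0
termination_by h

lemma zs_bounds (S : Finset ℕ) (h : ℕ) :
    0 ≤ zs S h ∧ zs S h ≤ (((S.filter fun s => 0 < s ∧ s ≤ h).sup id : ℕ) : ℤ) := by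
  induction h using Nat.strong_induction_on with
  | _ h ih =>
    rw [zs]
    dsimp only
    by_cases hM : (S.filter fun s => 0 < s ∧ s ≤ h).Nonempty
    · rw [dif_pos hM]
      set M := S.filter fun s => 0 < s ∧ s ≤ h with hMdef
      constructor
      · -- lower bound
        set s0 := M.max' hM with hs0def
        have hs0M : s0 ∈ M := M.max'_mem hM
        have hs0 : 0 < s0 ∧ s0 ≤ h := (Finset.mem_filter.mp hs0M).2
        have hlt : h - s0 < h := by omega
        have hrec := ih (h - s0) hlt
        have hle : zs S (h - s0) ≤ (s0 : ℤ) := by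
          refine le_trans hrec.2 ?_
          have : (S.filter fun s => 0 < s ∧ s ≤ h - s0).sup id ≤ s0 := by
            apply Finset.sup_le
            intro t ht
            have ht' := Finset.mem_filter.mp ht
            have htM : t ∈ M := by
              rw [hMdef]
              exact Finset.mem_filter.mpr ⟨ht'.1, ht'.2.1, by omega⟩
            exact M.le_max' t htM
          exact_mod_cast this
        have : (s0 : ℤ) - zs S (h - s0) ≤
            M.attach.sup' ((Finset.attach_nonempty_iff).mpr hM)
              (fun s => (s.1 : ℤ) - zs S (h - s.1)) :=
          Finset.le_sup' (f := fun s : {x // x ∈ M} => (s.1 : ℤ) - zs S (h - s.1))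
            (Finset.mem_attach M ⟨s0, hs0M⟩)
        exact le_trans (by omega : (0:ℤ) ≤ (s0:ℤ) - zs S (h - s0)) this
      · -- upper bound
        apply Finset.sup'_le
        rintro ⟨s, hsM⟩ -
        have hs := (Finset.mem_filter.mp hsM).2
        have hlt : h - s < h := by omega
        have hrec := ih (h - s) hlt
        have h1 : (s : ℤ) - zs S (h - s) ≤ (s : ℤ) := by omega
        have h2 : s ≤ M.sup id := Finset.le_sup (f := id) hsM
        calc (s : ℤ) - zs S (h - s) ≤ (s : ℤ) := h1
          _ ≤ ((M.sup id : ℕ) : ℤ) := by exact_mod_cast h2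
    · rw [dif_neg hM]
      simp

theorem stmt13 (S : Finset ℕ) (hS : S.Nonempty) (hpos : ∀ s ∈ S, 0 < s) (h : ℕ) :
    0 ≤ zs S h ∧ zs S h ≤ (S.max' hS : ℤ) := by
  obtain ⟨h0, h1⟩ := zs_bounds S h
  refine ⟨h0, le_trans h1 ?_⟩
  have : (S.filter fun s => 0 < s ∧ s ≤ h).sup id ≤ S.max' hS := by
    apply Finset.sup_le
    intro t ht
    exact S.le_max' t (Finset.mem_of_mem_filter t ht)
  exact_mod_cast this
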